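/- The map σ(N1, N2) = (1/2)|Σ(N1) △ Σ(N2)| is a metric on isomorphism classes of phylogenetic networks on a fixed set S of taxa: it is non-negative, symmetric, satisfies the triangle inequality, and σ(N1, N2) = 0 if and only if N1 ≅ N2. -/

import Mathlib

open scoped Classical

/-- A finite directed acyclic graph whose leaves are (injectively) labeled in `S`. -/
structure LDag (S : Type) : Type 1 where
  V : Type
  fin : Fintype V
  adj : V → V → Prop
  acyclic : WellFounded (fun a b => adj b a)
  lab : V → S
  labInj : ∀ u v : V, (∀ w, ¬ adj u w) → (∀ w, ¬ adj v w) → lab u = lab v → u = v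

attribute [instance] LDag.fin

namespace LDag

variable {S : Type}

/-- A leaf is a node with no children. -/
def IsLeaf (N : LDag S) (v : N.V) : Prop := ∀ w, ¬ N.adj v w

/-- `v` is a descendant of `u` (every node is a descendant of itself). -/
def Desc (N : LDag S) (u v : N.V) : Prop := Relation.ReflTransGen N.adj u v

/-- The cluster of `u`: the set of labels of the leaves that are descendants of `u`. -/
def cluster (N : LDag S) (u : N.V) : Set S :=
  {s | ∃ v, N.Desc u v ∧ N.IsLeaf v ∧ N.lab v = s}

/-- A tree node: a node with at most one parent. -/
def TreeNode (N : LDag S) (v : N.V) : Prop :=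
  ∀ p q, N.adj p v → N.adj q v → p = q

/-- A root: a node with no parents. -/
def IsRoot (N : LDag S) (r : N.V) : Prop := ∀ u, ¬ N.adj u r

/-- Tree-child: every internal node has a child that is a tree node. -/
def TreeChild (N : LDag S) : Prop :=
  ∀ v, ¬ N.IsLeaf v → ∃ w, N.adj v w ∧ N.TreeNode w

/-- `PathN N u v k`: there is a directed path of length `k` from `u` to `v`. -/
inductive PathN (N : LDag S) : N.V → N.V → ℕ → Prop
  | refl (v : N.V) : PathN N v v 0
  | cons {u v w : N.V} {k : ℕ} : N.adj u v → PathN N v w k → PathN N u w (k + 1)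

/-- The height of a node: the largest length of a directed path from it to a leaf. -/
noncomputable def height (N : LDag S) (v : N.V) : ℕ :=
  sSup {k | ∃ s, N.IsLeaf s ∧ PathN N v s k}

/-- Node equivalence between (possibly equal) labeled DAGs, defined recursively:
two leaves with the same label are equivalent, and two internal nodes are equivalent
when their children can be matched into equivalent pairs. -/
noncomputable def equivTo (N1 N2 : LDag S) : N1.V → N2.V → Prop :=
  N1.acyclic.fix (fun u ih v =>
    (N1.IsLeaf u ∧ N2.IsLeaf v ∧ N1.lab u = N2.lab v) ∨
    (¬ N1.IsLeaf u ∧ ¬ N2.IsLeaf v ∧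
      ∃ f : {w // N1.adj u w} ≃ {w // N2.adj v w},
        ∀ w : {w // N1.adj u w}, ih w.1 w.2 (f w).1))

end LDag

/-- Pre-nested labels: finitely branching trees of labels (multisets are obtained
as a quotient by `NEq` below). -/
inductive PreNested (S : Type) : Type
  | leaf : S → PreNested S
  | node : List (PreNested S) → PreNested S

/-- Equality of pre-nested labels as nested multisets. -/
inductive NEq {S : Type} : PreNested S → PreNested S → Prop
  | leaf (a : S) : NEq (.leaf a) (.leaf a)
  | node {l m : List (PreNested S)} : List.Forall₂ NEq l m → NEq (.node l) (.node m)
  | perm {l m : List (PreNested S)} : l.Perm m → NEq (.node l) (.node m)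
  | symm {a b : PreNested S} : NEq a b → NEq b a
  | trans {a b c : PreNested S} : NEq a b → NEq b c → NEq a c

mutual
  theorem NEq.refl {S : Type} : ∀ a : PreNested S, NEq a a
    | .leaf s => .leaf s
    | .node l => .node (NEq.reflL l)
  theorem NEq.reflL {S : Type} : ∀ l : List (PreNested S), List.Forall₂ NEq l l
    | [] => .nil
    | a :: l => .cons (NEq.refl a) (NEq.reflL l)
end

instance PreNested.setoid (S : Type) : Setoid (PreNested S) :=
  ⟨NEq, ⟨NEq.refl, fun h => h.symm, fun h1 h2 => h1.trans h2⟩⟩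

/-- Nested multisets (of multisets of ...) of labels. -/
def Nested (S : Type) : Type := Quotient (PreNested.setoid S)

/-- `TaxaIn s p`: the taxon `s` occurs somewhere (at any nesting depth) in `p`. -/
inductive TaxaIn {S : Type} : S → PreNested S → Prop
  | leaf (s : S) : TaxaIn s (.leaf s)
  | node {s : S} {p : PreNested S} {l : List (PreNested S)} :
      p ∈ l → TaxaIn s p → TaxaIn s (.node l)

mutual
  /-- Nesting depth of a pre-nested label: a singleton `{s}` has depth 1. -/
  def depthP {S : Type} : PreNested S → ℕ
    | .leaf _ => 1
    | .node l => depthL l + 1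
  def depthL {S : Type} : List (PreNested S) → ℕ
    | [] => 0
    | p :: ps => max (depthP p) (depthL ps)
end

namespace LDag

variable {S : Type}

/-- The nested label of a node: the singleton of its label for a leaf, and the
multiset of the nested labels of its children otherwise. -/
noncomputable def nested (N : LDag S) : N.V → Nested S :=
  N.acyclic.fix (fun v ih =>
    if h : N.IsLeaf v then (⟦PreNested.leaf (N.lab v)⟧ : Nested S)
    else ⟦PreNested.node (((Finset.univ.filter (fun w => N.adj v w)).attach.toList).map
        (fun w => (ih w.1 (Finset.mem_filter.mp w.2).2).out))⟧)

/-- `Υ(N)`: the multiset of equivalence classes (= nested labels) of the nodes of `N`,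
with multiplicities. -/
noncomputable def UpsilonM (N : LDag S) : Multiset (Nested S) :=
  Finset.univ.val.map N.nested

/-- Label-preserving isomorphisms of labeled DAGs. -/
structure Iso (N1 N2 : LDag S) where
  toEquiv : N1.V ≃ N2.V
  adj_iff : ∀ u v : N1.V, N2.adj (toEquiv u) (toEquiv v) ↔ N1.adj u v
  lab_leaf : ∀ v : N1.V, N1.IsLeaf v → N2.lab (toEquiv v) = N1.lab v

def IsIso (N1 N2 : LDag S) : Prop := Nonempty (Iso N1 N2)

theorem Iso.leaf_map {N1 N2 : LDag S} (e : Iso N1 N2) {v : N1.V} (h : N1.IsLeaf v) :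
    N2.IsLeaf (e.toEquiv v) := by
  intro w hw
  have hw' : N2.adj (e.toEquiv v) (e.toEquiv (e.toEquiv.symm w)) := by simpa using hw
  exact h _ ((e.adj_iff _ _).mp hw')

def Iso.refl (N : LDag S) : Iso N N :=
  ⟨Equiv.refl _, fun _ _ => Iff.rfl, fun _ _ => rfl⟩

def Iso.symm {N1 N2 : LDag S} (e : Iso N1 N2) : Iso N2 N1 where
  toEquiv := e.toEquiv.symm
  adj_iff u v := by rw [← e.adj_iff]; simp
  lab_leaf v hv := by
    have h1 : N1.IsLeaf (e.toEquiv.symm v) := by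
      intro w hw
      have : N2.adj v (e.toEquiv w) := by
        have := (e.adj_iff (e.toEquiv.symm v) w).mpr hw
        simpa using this
      exact hv _ this
    have := e.lab_leaf _ h1
    simpa using this.symm

def Iso.trans {N1 N2 N3 : LDag S} (e : Iso N1 N2) (f : Iso N2 N3) : Iso N1 N3 where
  toEquiv := e.toEquiv.trans f.toEquiv
  adj_iff u v := by
    simp only [Equiv.trans_apply]
    rw [f.adj_iff, e.adj_iff]
  lab_leaf v hv := by
    simp only [Equiv.trans_apply]
    rw [f.lab_leaf _ (e.leaf_map hv), e.lab_leaf _ hv]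

instance isoSetoid (S : Type) : Setoid (LDag S) :=
  ⟨IsIso, ⟨fun N => ⟨Iso.refl N⟩, fun ⟨e⟩ => ⟨e.symm⟩, fun ⟨e⟩ ⟨f⟩ => ⟨e.trans f⟩⟩⟩

/-- Isomorphism classes of labeled DAGs. -/
def IsoClass (S : Type) : Type 1 := Quotient (isoSetoid S)

/-- The rooted subnetwork `N(u)` generated by a node `u`: the induced subgraph on
the set of descendants of `u`. -/
noncomputable def subnet (N : LDag S) (u : N.V) : LDag S where
  V := {v // N.Desc u v}
  fin := Subtype.fintype _
  adj a b := N.adj a.1 b.1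
  acyclic := by
    have h : (fun (a b : {v // N.Desc u v}) => N.adj b.1 a.1) =
        InvImage (fun a b => N.adj b a) Subtype.val := rfl
    rw [h]
    exact InvImage.wf _ N.acyclic
  lab v := N.lab v.1
  labInj := by
    intro a b ha hb hlab
    apply Subtype.ext
    refine N.labInj a.1 b.1 ?_ ?_ hlab
    · intro w hw
      exact ha ⟨w, a.2.trans (Relation.ReflTransGen.single hw)⟩ hw
    · intro w hw
      exact hb ⟨w, b.2.trans (Relation.ReflTransGen.single hw)⟩ hw

/-- `Σ(N)`: the multiset of isomorphism classes of the rooted subnetworks generated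
by the nodes of `N`, with multiplicities. -/
noncomputable def SigmaM (N : LDag S) : Multiset (IsoClass S) :=
  Finset.univ.val.map (fun u => (Quotient.mk (isoSetoid S) (N.subnet u) : IsoClass S))

/-- Nakhleh's dissimilarity `m(N1,N2) = |Υ(N1) △ Υ(N2)| / 2`. -/
noncomputable def mDist (N1 N2 : LDag S) : ℝ :=
  (((N1.UpsilonM - N2.UpsilonM) + (N2.UpsilonM - N1.UpsilonM)).card : ℝ) / 2

/-- The distance `σ(N1,N2) = |Σ(N1) △ Σ(N2)| / 2`. -/
noncomputable def sigmaDist (N1 N2 : LDag S) : ℝ :=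
  (((N1.SigmaM - N2.SigmaM) + (N2.SigmaM - N1.SigmaM)).card : ℝ) / 2

end LDag

/-- An `S`-DAG: a labeled DAG whose leaves are bijectively labeled by `S`. -/
structure SDag (S : Type) extends LDag S where
  surjLab : ∀ s : S, ∃ v, toLDag.IsLeaf v ∧ toLDag.lab v = s

/-- A phylogenetic network on `S`: a rooted `S`-DAG. -/
structure PhyloNetwork (S : Type) extends SDag S where
  rooted : ∃! r, toLDag.IsRoot r


namespace LDag

variable {S : Type}

theorem desc_map {N1 N2 : LDag S} (e : Iso N1 N2) {u v : N1.V} (h : N1.Desc u v) :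
    N2.Desc (e.toEquiv u) (e.toEquiv v) :=
  Relation.ReflTransGen.lift _ (fun a b hab => (e.adj_iff a b).mpr hab) _ _ h

/-- An isomorphism restricts to subnets. -/
noncomputable def Iso.subnetIso {N1 N2 : LDag S} (e : Iso N1 N2) (u : N1.V) :
    Iso (N1.subnet u) (N2.subnet (e.toEquiv u)) where
  toEquiv :=
    { toFun := fun v => ⟨e.toEquiv v.1, desc_map e v.2⟩
      invFun := fun w => ⟨e.toEquiv.symm w.1, by
        have h := desc_map e.symm w.2
        rw [show (Iso.symm e).toEquiv = e.toEquiv.symm from rfl] at h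
        rwa [Equiv.symm_apply_apply] at h⟩
      left_inv := fun v => by simp; rfl
      right_inv := fun w => by simp; rfl }
  adj_iff a b := e.adj_iff a.1 b.1
  lab_leaf v hv := by
    have hleaf : N1.IsLeaf v.1 := by
      intro w hw
      exact hv ⟨w, v.2.trans (Relation.ReflTransGen.single hw)⟩ hw
    exact e.lab_leaf v.1 hleaf

/-- If every node is a descendant of `u`, then `N.subnet u ≅ N`. -/
noncomputable def subnetFullIso (N : LDag S) (u : N.V) (h : ∀ v, N.Desc u v) :
    Iso (N.subnet u) N where
  toEquiv := Equiv.subtypeUnivEquiv h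
  adj_iff a b := Iff.rfl
  lab_leaf v _ := rfl

theorem sigmaM_eq_of_iso {N1 N2 : LDag S} (h : N1.IsIso N2) : N1.SigmaM = N2.SigmaM := by
  obtain ⟨e⟩ := h
  unfold SigmaM
  have huniv : (Finset.univ : Finset N2.V).val
      = (Finset.univ : Finset N1.V).val.map e.toEquiv := by
    have := (Finset.map_univ_equiv e.toEquiv).symm
    rw [this]; rfl
  rw [huniv]; refine Eq.trans ?_ (Multiset.map_map _ _ _).symm
  apply Multiset.map_congr rfl
  intro u _
  exact Quotient.sound ⟨e.subnetIso u⟩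

theorem parent_wf (N : LDag S) : WellFounded (fun a b : N.V => N.adj a b) := by
  have hw : WellFounded (Relation.TransGen (fun a b : N.V => N.adj b a)) :=
    N.acyclic.transGen
  have hirr : ∀ x : N.V, ¬ Relation.TransGen (fun a b : N.V => N.adj a b) x x := by
    intro x hx
    have hx' := (Relation.transGen_swap).mpr hx
    exact (WellFounded.isIrrefl hw).irrefl x hx'
  have : IsTrans N.V (Relation.TransGen (fun a b : N.V => N.adj a b)) := inferInstance
  have hI : IsIrrefl N.V (Relation.TransGen (fun a b : N.V => N.adj a b)) := ⟨hirr⟩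
  have hwf : WellFounded (Relation.TransGen (fun a b : N.V => N.adj a b)) :=
    Finite.wellFounded_of_trans_of_irrefl _
  exact Subrelation.wf (fun h => Relation.TransGen.single h) hwf

theorem exists_root_desc (N : LDag S) (v : N.V) : ∃ r, N.IsRoot r ∧ N.Desc r v := by
  induction v using (parent_wf N).induction with
  | _ v ih =>
    by_cases h : ∃ p, N.adj p v
    · obtain ⟨p, hp⟩ := h
      obtain ⟨r, hr, hd⟩ := ih p hp
      exact ⟨r, hr, hd.tail hp⟩
    · exact ⟨v, fun u hu => h ⟨u, hu⟩, Relation.ReflTransGen.refl⟩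

theorem self_mem_sigmaM (N : PhyloNetwork S) :
    (Quotient.mk (isoSetoid S) N.toLDag : IsoClass S) ∈ N.toLDag.SigmaM := by
  obtain ⟨r, hr, hu⟩ := N.rooted
  have hall : ∀ v, N.toLDag.Desc r v := by
    intro v
    obtain ⟨r', hr', hd⟩ := exists_root_desc N.toLDag v
    rwa [← hu r' hr']
  have : (Quotient.mk (isoSetoid S) (N.toLDag.subnet r) : IsoClass S)
      = Quotient.mk (isoSetoid S) N.toLDag :=
    Quotient.sound ⟨subnetFullIso N.toLDag r hall⟩
  rw [← this]
  unfold SigmaM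
  exact Multiset.mem_map_of_mem _ (Finset.mem_univ_val r)

theorem card_eq_of_iso {N1 N2 : LDag S} (h : N1.IsIso N2) :
    Fintype.card N1.V = Fintype.card N2.V := by
  obtain ⟨e⟩ := h
  exact Fintype.card_congr e.toEquiv

theorem iso_of_sigmaM_eq {N1 N2 : PhyloNetwork S}
    (h : N1.toLDag.SigmaM = N2.toLDag.SigmaM) : N1.toLDag.IsIso N2.toLDag := by
  have h1 : (Quotient.mk (isoSetoid S) N1.toLDag : IsoClass S) ∈ N2.toLDag.SigmaM := by
    rw [← h]; exact self_mem_sigmaM N1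
  have h2 : (Quotient.mk (isoSetoid S) N2.toLDag : IsoClass S) ∈ N1.toLDag.SigmaM := by
    rw [h]; exact self_mem_sigmaM N2
  unfold SigmaM at h1 h2
  obtain ⟨u, _, hu⟩ := Multiset.mem_map.mp h1
  obtain ⟨v, _, hv⟩ := Multiset.mem_map.mp h2
  have hu' : (N2.toLDag.subnet u).IsIso N1.toLDag := Quotient.exact hu
  have hv' : (N1.toLDag.subnet v).IsIso N2.toLDag := Quotient.exact hv
  -- cardinality comparison
  have c1 : Fintype.card N1.toLDag.V = Fintype.card (N2.toLDag.subnet u).V :=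
    (card_eq_of_iso hu').symm
  have c2 : Fintype.card N2.toLDag.V = Fintype.card (N1.toLDag.subnet v).V :=
    (card_eq_of_iso hv').symm
  have l1 : Fintype.card (N2.toLDag.subnet u).V ≤ Fintype.card N2.toLDag.V :=
    Fintype.card_subtype_le _
  have l2 : Fintype.card (N1.toLDag.subnet v).V ≤ Fintype.card N1.toLDag.V :=
    Fintype.card_subtype_le _
  have heq : Fintype.card (N2.toLDag.subnet u).V = Fintype.card N2.toLDag.V := by omega
  have hall : ∀ w, N2.toLDag.Desc u w := by
    intro w
    by_contra hw
    exact absurd heq (ne_of_lt (Fintype.card_subtype_lt (p := fun w => N2.toLDag.Desc u w) hw))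
  have hfull : (N2.toLDag.subnet u).IsIso N2.toLDag := ⟨subnetFullIso N2.toLDag u hall⟩
  obtain ⟨e1⟩ := hu'
  obtain ⟨e2⟩ := hfull
  exact ⟨e1.symm.trans e2⟩

theorem multiset_sub_triangle {α : Type*} [DecidableEq α] (A B C : Multiset α) :
    A - C ≤ A - B + (B - C) := by
  rw [Multiset.le_iff_count]
  intro a
  simp only [Multiset.count_sub, Multiset.count_add]
  omega

end LDag

/-- `σ(N1,N2) = |Σ(N1) △ Σ(N2)| / 2` is a metric on isomorphism classes of
phylogenetic networks on a fixed taxon set: non-negative, separating, symmetric, and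
satisfying the triangle inequality. -/
theorem sigmaDist_is_metric {S : Type} (N1 N2 N3 : PhyloNetwork S) :
    0 ≤ N1.toLDag.sigmaDist N2.toLDag ∧
    (N1.toLDag.sigmaDist N2.toLDag = 0 ↔ N1.toLDag.IsIso N2.toLDag) ∧
    N1.toLDag.sigmaDist N2.toLDag = N2.toLDag.sigmaDist N1.toLDag ∧
    N1.toLDag.sigmaDist N3.toLDag ≤
      N1.toLDag.sigmaDist N2.toLDag + N2.toLDag.sigmaDist N3.toLDag := by
  classical
  have tri : ∀ X Y Z : Multiset (LDag.IsoClass S),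
      (Multiset.card (X - Z) + Multiset.card (Z - X) : ℝ) ≤
      (Multiset.card (X - Y) + Multiset.card (Y - X)) +
      (Multiset.card (Y - Z) + Multiset.card (Z - Y)) := by
    intro X Y Z
    have h1 : Multiset.card (X - Z) ≤ Multiset.card (X - Y) + Multiset.card (Y - Z) := by
      simpa using Multiset.card_le_card (LDag.multiset_sub_triangle X Y Z)
    have h2 : Multiset.card (Z - X) ≤ Multiset.card (Z - Y) + Multiset.card (Y - X) := by
      simpa using Multiset.card_le_card (LDag.multiset_sub_triangle Z Y X)
    push_cast
    have := (Nat.cast_le (α := ℝ)).mpr h1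
    have := (Nat.cast_le (α := ℝ)).mpr h2
    push_cast at *
    linarith
  refine ⟨?_, ?_, ?_, ?_⟩
  · unfold LDag.sigmaDist
    positivity
  · unfold LDag.sigmaDist
    constructor
    · intro h
      have hc : (N1.toLDag.SigmaM - N2.toLDag.SigmaM
          + (N2.toLDag.SigmaM - N1.toLDag.SigmaM)) = 0 := by
        field_simp at h
        refine Multiset.card_eq_zero.mp ?_
        rw [Multiset.card_add]
        simp at h; exact_mod_cast h
      have h1 : N1.toLDag.SigmaM - N2.toLDag.SigmaM ≤ 0 := hc ▸ Multiset.le_add_right _ _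
      have h2 : N2.toLDag.SigmaM - N1.toLDag.SigmaM ≤ 0 := hc ▸ Multiset.le_add_left _ _
      have hAB : N1.toLDag.SigmaM = N2.toLDag.SigmaM := le_antisymm
        (tsub_eq_zero_iff_le.mp (Multiset.le_zero.mp h1))
        (tsub_eq_zero_iff_le.mp (Multiset.le_zero.mp h2))
      exact LDag.iso_of_sigmaM_eq hAB
    · intro h
      rw [LDag.sigmaM_eq_of_iso h]
      simp
  · unfold LDag.sigmaDist
    rw [add_comm (N1.toLDag.SigmaM - N2.toLDag.SigmaM) _]
  · unfold LDag.sigmaDist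
    rw [← add_div, div_le_div_iff_of_pos_right (by norm_num : (0:ℝ) < 2)]
    simp only [Multiset.card_add]
    push_cast
    exact tri _ _ _
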